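/- Let 𝔤 be a 5-dimensional Lie algebra, let α, β ∈ 𝔤* be linearly independent, let Z³ be the space of closed 3-forms, and set V = {γ ∈ Z³ : γ∧α = 0}. If dim(β∧V) < 2 (as a subspace of Λ⁴𝔤*), then 𝔤 admits no hypo structure whose almost-contact form is α. -/

import Mathlib

open ExteriorAlgebra

/-- Module.Basis `e¹,…,e⁵` of `𝔤*` (0-indexed: `e i` is `e^{i+1}`) inside `Λ*𝔤*`. -/
noncomputable def e (i : Fin 5) : ExteriorAlgebra ℝ (Fin 5 → ℝ) := ι ℝ (Pi.single i 1)

/-- The space of 2-forms `Λ²𝔤*` (spanned by decomposable 2-forms). -/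
noncomputable def Lam2 : Submodule ℝ (ExteriorAlgebra ℝ (Fin 5 → ℝ)) :=
  Submodule.span ℝ {x | ∃ a b : Fin 5 → ℝ, x = ι ℝ a * ι ℝ b}

/-- The space of 3-forms `Λ³𝔤*`. -/
noncomputable def Lam3 : Submodule ℝ (ExteriorAlgebra ℝ (Fin 5 → ℝ)) :=
  Submodule.span ℝ {x | ∃ a b c : Fin 5 → ℝ, x = ι ℝ a * ι ℝ b * ι ℝ c}

/-- A hypo structure on the 5-dimensional Lie algebra encoded by its Chevalley–Eilenberg
differential `d`: a quadruplet `(α, ω₁, ω₂, ω₃)` of a 1-form `α = ι a` and 2-forms `ωᵢ`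
with `ωᵢ∧ωⱼ = δᵢⱼ v` for a 4-form `v` with `v∧α ≠ 0`, such that
`dω₁ = 0`, `d(ω₂∧α) = 0`, `d(ω₃∧α) = 0`. -/
def IsHypo (d : ExteriorAlgebra ℝ (Fin 5 → ℝ) →ₗ[ℝ] ExteriorAlgebra ℝ (Fin 5 → ℝ))
    (a : Fin 5 → ℝ) (ω : Fin 3 → ExteriorAlgebra ℝ (Fin 5 → ℝ)) : Prop :=
  (∀ i, ω i ∈ Lam2) ∧
  (∃ v : ExteriorAlgebra ℝ (Fin 5 → ℝ),
    (∀ i j, ω i * ω j = if i = j then v else 0) ∧ v * ι ℝ a ≠ 0) ∧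
  d (ω 0) = 0 ∧ d (ω 1 * ι ℝ a) = 0 ∧ d (ω 2 * ι ℝ a) = 0

/-! ### Auxiliary material -/

namespace Stmt8Aux

local notation "V5" => (Fin 5 → ℝ)
local notation "Alg" => ExteriorAlgebra ℝ (Fin 5 → ℝ)

lemma iswap (x y : V5) : ι ℝ x * ι ℝ y = -(ι ℝ y * ι ℝ x) :=
  eq_neg_of_add_eq_zero_left (ι_add_mul_swap x y)

lemma zmid (x : V5) (w : Alg) : ι ℝ x * w * ι ℝ x = 0 := by
  obtain ⟨c, hc⟩ : ∃ c, w * ι ℝ x = ι ℝ x * c := by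
    induction w using ExteriorAlgebra.induction with
    | algebraMap r => exact ⟨algebraMap ℝ _ r, by rw [Algebra.commutes]⟩
    | ι y => exact ⟨-ι ℝ y, by rw [iswap, mul_neg]⟩
    | mul a b ha hb =>
      obtain ⟨ca, hca⟩ := ha; obtain ⟨cb, hcb⟩ := hb
      exact ⟨ca * cb, by rw [mul_assoc, hcb, ← mul_assoc, hca, mul_assoc]⟩
    | add a b ha hb =>
      obtain ⟨ca, hca⟩ := ha; obtain ⟨cb, hcb⟩ := hb
      exact ⟨ca + cb, by rw [add_mul, hca, hcb, mul_add]⟩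
  rw [mul_assoc, hc, ← mul_assoc, ι_sq_zero, zero_mul]

lemma z4 (x : V5) (a b : Alg) : ι ℝ x * a * b * ι ℝ x = 0 := by
  rw [mul_assoc (ι ℝ x) a b]; exact zmid x (a * b)

lemma z5 (x : V5) (a b c : Alg) : ι ℝ x * a * b * c * ι ℝ x = 0 := by
  rw [mul_assoc (ι ℝ x) a b, mul_assoc (ι ℝ x) (a * b) c]; exact zmid x (a * b * c)

lemma dup1 (x : V5) (c : Alg) : ι ℝ x * (ι ℝ x * c) = 0 := by
  rw [← mul_assoc, ι_sq_zero, zero_mul]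
lemma dup2 (x y : V5) : ι ℝ x * (ι ℝ y * ι ℝ x) = 0 := by
  rw [← mul_assoc]; exact zmid x (ι ℝ y)
lemma dup2' (x y : V5) (c : Alg) : ι ℝ x * (ι ℝ y * (ι ℝ x * c)) = 0 := by
  rw [← mul_assoc, ← mul_assoc, zmid, zero_mul]
lemma dup3 (x y z : V5) : ι ℝ x * (ι ℝ y * (ι ℝ z * ι ℝ x)) = 0 := by
  rw [← mul_assoc, ← mul_assoc]; exact z4 x (ι ℝ y) (ι ℝ z)
lemma dup3' (x y z : V5) (c : Alg) : ι ℝ x * (ι ℝ y * (ι ℝ z * (ι ℝ x * c))) = 0 := by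
  rw [← mul_assoc, ← mul_assoc, ← mul_assoc, z4, zero_mul]
lemma dup4 (x y z w : V5) : ι ℝ x * (ι ℝ y * (ι ℝ z * (ι ℝ w * ι ℝ x))) = 0 := by
  rw [← mul_assoc, ← mul_assoc, ← mul_assoc]; exact z5 x (ι ℝ y) (ι ℝ z) (ι ℝ w)
lemma dup4' (x y z w : V5) (c : Alg) :
    ι ℝ x * (ι ℝ y * (ι ℝ z * (ι ℝ w * (ι ℝ x * c)))) = 0 := by
  rw [← mul_assoc, ← mul_assoc, ← mul_assoc, ← mul_assoc, z5, zero_mul]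

/-! The top-degree functional. -/

noncomputable def Det5 (u : Module.Basis (Fin 5) ℝ V5) : V5 [⋀^Fin 5]→ₗ[ℝ] ℝ :=
  (Matrix.detRowAlternating : (Fin 5 → ℝ) [⋀^Fin 5]→ₗ[ℝ] ℝ).compLinearMap
    (u.equivFun : V5 ≃ₗ[ℝ] (Fin 5 → ℝ)).toLinearMap

noncomputable def famT (u : Module.Basis (Fin 5) ℝ V5) : ∀ i : ℕ, V5 [⋀^Fin i]→ₗ[ℝ] ℝ :=
  Function.update (fun _ => 0) 5 (Det5 u)

noncomputable def T (u : Module.Basis (Fin 5) ℝ V5) : Alg →ₗ[ℝ] ℝ :=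
  ExteriorAlgebra.liftAlternating (famT u)

lemma T_eval (u : Module.Basis (Fin 5) ℝ V5) (v1 v2 v3 v4 v5 : V5) :
    T u (ι ℝ v1 * (ι ℝ v2 * (ι ℝ v3 * (ι ℝ v4 * ι ℝ v5)))) =
      Det5 u ![v1, v2, v3, v4, v5] := by
  rw [T, liftAlternating_ι_mul, liftAlternating_ι_mul, liftAlternating_ι_mul,
    liftAlternating_ι_mul, liftAlternating_ι]
  have h5 : famT u (Nat.succ (Nat.succ (Nat.succ (Nat.succ 1)))) = Det5 u := by
    show famT u 5 = Det5 u
    simp [famT]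
  rw [h5]
  simp

lemma Det5_rows (u : Module.Basis (Fin 5) ℝ V5) (f : Fin 5 → Fin 5) :
    Det5 u (fun r => u (f r)) =
      Matrix.det (Matrix.of fun r c => if f r = c then (1:ℝ) else 0) := by
  rw [Det5, AlternatingMap.compLinearMap_apply]
  congr 1
  ext r c
  simp [Module.Basis.equivFun_self, eq_comm]

lemma det_if_ne_zero (f : Equiv.Perm (Fin 5)) :
    Matrix.det (Matrix.of fun r c => if f r = c then (1:ℝ) else 0) ≠ 0 := by
  have hM : (Matrix.of fun r c => if f r = c then (1:ℝ) else 0) = f.permMatrix ℝ := by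
    ext r c
    simp [Equiv.Perm.permMatrix, PEquiv.toMatrix_apply, Equiv.toPEquiv_apply, eq_comm]
  rw [hM, Matrix.det_permutation]
  rcases Int.units_eq_one_or (Equiv.Perm.sign f) with h | h <;> rw [h] <;> norm_num

lemma Det5_ne_zero (u : Module.Basis (Fin 5) ℝ V5) (f : Equiv.Perm (Fin 5)) :
    Det5 u (fun r => u (f r)) ≠ 0 := by
  rw [Det5_rows]; exact det_if_ne_zero f

/-! Coordinates for 2-forms. -/

lemma expand1 (u : Module.Basis (Fin 5) ℝ V5) (x : V5) :
    ι ℝ x = ∑ i, u.repr x i • ι ℝ (u i) := by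
  conv_lhs => rw [← Module.Basis.sum_repr u x]
  rw [map_sum]
  simp

lemma expand2 (u : Module.Basis (Fin 5) ℝ V5) (x y : V5) :
    ι ℝ x * ι ℝ y = ∑ p : Fin 5 × Fin 5,
      (u.repr x p.1 * u.repr y p.2) • (ι ℝ (u p.1) * ι ℝ (u p.2)) := by
  rw [expand1 u x, expand1 u y, Finset.sum_mul_sum, Fintype.sum_prod_type]
  refine Finset.sum_congr rfl fun i _ => Finset.sum_congr rfl fun j _ => ?_
  simp [smul_mul_assoc, mul_smul_comm, smul_smul, mul_comm]

lemma mem_span_pairs (u : Module.Basis (Fin 5) ℝ V5) {w : Alg} (hw : w ∈ Lam2) :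
    ∃ c : Fin 5 × Fin 5 → ℝ,
      ∑ p : Fin 5 × Fin 5, c p • (ι ℝ (u p.1) * ι ℝ (u p.2)) = w := by
  rw [← Submodule.mem_span_range_iff_exists_fun]
  refine Submodule.span_le.mpr ?_ hw
  rintro _ ⟨x, y, rfl⟩
  rw [expand2 u x y]
  exact Submodule.sum_mem _ fun p _ =>
    Submodule.smul_mem _ _ (Submodule.subset_span ⟨p, rfl⟩)

lemma M5 (u : Module.Basis (Fin 5) ℝ V5) (i j k l : Fin 5)
    (hp : i = 0 ∨ i = 1 ∨ j = 0 ∨ j = 1) (hq : k = 0 ∨ k = 1 ∨ l = 0 ∨ l = 1) :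
    ι ℝ (u i) * ι ℝ (u j) * (ι ℝ (u k) * ι ℝ (u l)) * ι ℝ (u 0) = 0 := by
  rcases hp with h | h | h | h <;> subst h <;> rcases hq with h | h | h | h <;> subst h <;>
    simp [mul_assoc, dup1, dup2, dup2', dup3, dup3', dup4, dup4', ι_sq_zero]

/-! ### The key algebraic lemma -/

set_option maxHeartbeats 2000000 in
set_option maxRecDepth 16000 in
lemma keyA (u : Module.Basis (Fin 5) ℝ V5) (ω : Alg) (hω : ω ∈ Lam2)
    (h : ω * ι ℝ (u 0) * ι ℝ (u 1) = 0) : ω * ω * ι ℝ (u 0) = 0 := by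
  obtain ⟨c, hc⟩ := mem_span_pairs u hω
  have hrel : ∀ (k2 k3 k4 : Fin 5) (pm : Equiv.Perm (Fin 5)),
      ((k2, k3) : Fin 5 × Fin 5) ≠ (k3, k2) →
      (fun r => u (pm r)) = ![u k4, u k2, u k3, u 0, u 1] →
      (∀ p : Fin 5 × Fin 5, ¬ (p = (k2, k3) ∨ p = (k3, k2)) →
        ι ℝ (u k4) * (ι ℝ (u p.1) * (ι ℝ (u p.2) * (ι ℝ (u 0) * ι ℝ (u 1)))) = 0) →
      c (k2, k3) = c (k3, k2) := by
    intro k2 k3 k4 pm hne hpm hkill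
    have hsum : ι ℝ (u k4) * (ω * ι ℝ (u 0) * ι ℝ (u 1)) = 0 := by rw [h, mul_zero]
    rw [← hc] at hsum
    simp only [Finset.sum_mul, Finset.mul_sum, smul_mul_assoc, mul_smul_comm,
      mul_assoc] at hsum
    have hT := congrArg (T u) hsum
    simp only [map_sum, map_smul, smul_eq_mul, map_zero] at hT
    have hz : ∀ p ∈ (Finset.univ : Finset (Fin 5 × Fin 5)),
        p ∉ ({(k2, k3), (k3, k2)} : Finset (Fin 5 × Fin 5)) →
        c p * T u (ι ℝ (u k4) * (ι ℝ (u p.1) * (ι ℝ (u p.2) *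
          (ι ℝ (u 0) * ι ℝ (u 1))))) = 0 := by
      intro p _ hp
      rw [hkill p (by simpa using hp), map_zero, mul_zero]
    rw [← Finset.sum_subset (Finset.subset_univ _) hz, Finset.sum_pair hne] at hT
    have hsw : ι ℝ (u k3) * (ι ℝ (u k2) * (ι ℝ (u 0) * ι ℝ (u 1)))
        = -(ι ℝ (u k2) * (ι ℝ (u k3) * (ι ℝ (u 0) * ι ℝ (u 1)))) := by
      rw [← mul_assoc, iswap (u k3) (u k2), neg_mul, mul_assoc]
    rw [hsw] at hT
    simp only [T_eval, mul_neg, map_neg] at hT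
    have hD : Det5 u ![u k4, u k2, u k3, u 0, u 1] ≠ 0 := by
      rw [← hpm]; exact Det5_ne_zero u pm
    have h0 : (c (k2, k3) - c (k3, k2)) * Det5 u ![u k4, u k2, u k3, u 0, u 1] = 0 := by
      linear_combination hT
    rcases mul_eq_zero.mp h0 with h0 | h0
    · linarith
    · exact absurd h0 hD
  have h23 : c (2, 3) = c (3, 2) := by
    refine hrel 2 3 4 ⟨![4, 2, 3, 0, 1], ![3, 4, 1, 2, 0], by decide, by decide⟩
      (by decide) (by funext r; fin_cases r <;> rfl) ?_
    rintro ⟨i, j⟩ hp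
    fin_cases i <;> fin_cases j <;> first
      | exact absurd (by decide) hp
      | simp [dup1, dup2, dup2', dup3, dup3', dup4, dup4', ι_sq_zero]
  have h24 : c (2, 4) = c (4, 2) := by
    refine hrel 2 4 3 ⟨![3, 2, 4, 0, 1], ![3, 4, 1, 0, 2], by decide, by decide⟩
      (by decide) (by funext r; fin_cases r <;> rfl) ?_
    rintro ⟨i, j⟩ hp
    fin_cases i <;> fin_cases j <;> first
      | exact absurd (by decide) hp
      | simp [dup1, dup2, dup2', dup3, dup3', dup4, dup4', ι_sq_zero]
  have h34 : c (3, 4) = c (4, 3) := by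
    refine hrel 3 4 2 ⟨![2, 3, 4, 0, 1], ![3, 4, 0, 1, 2], by decide, by decide⟩
      (by decide) (by funext r; fin_cases r <;> rfl) ?_
    rintro ⟨i, j⟩ hp
    fin_cases i <;> fin_cases j <;> first
      | exact absurd (by decide) hp
      | simp [dup1, dup2, dup2', dup3, dup3', dup4, dup4', ι_sq_zero]
  classical
  set Q : Fin 5 × Fin 5 → Prop := fun p => p.1 = 0 ∨ p.1 = 1 ∨ p.2 = 0 ∨ p.2 = 1 with hQ
  have hsplit := Finset.sum_filter_add_sum_filter_not (Finset.univ : Finset (Fin 5 × Fin 5)) Q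
    (fun p => c p • (ι ℝ (u p.1) * ι ℝ (u p.2)))
  rw [hc] at hsplit
  have hB : ∑ p ∈ Finset.univ.filter (fun p => ¬ Q p),
      c p • (ι ℝ (u p.1) * ι ℝ (u p.2)) = 0 := by
    rw [Finset.sum_filter, Fintype.sum_prod_type]
    simp only [Fin.sum_univ_five]
    norm_num [hQ]
    rw [← h23, ← h24, ← h34, iswap (u 3) (u 2), iswap (u 4) (u 2), iswap (u 4) (u 3)]
    simp [ι_sq_zero, smul_neg]
    abel
  rw [hB, add_zero] at hsplit
  rw [← hsplit, Finset.sum_mul, Finset.sum_mul]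
  refine Finset.sum_eq_zero fun p hp => ?_
  rw [Finset.mul_sum, Finset.sum_mul]
  refine Finset.sum_eq_zero fun q hq => ?_
  have hQp : Q p := (Finset.mem_filter.mp hp).2
  have hQq : Q q := (Finset.mem_filter.mp hq).2
  simp only [smul_mul_assoc, mul_smul_comm]
  rw [M5 u p.1 p.2 q.1 q.2 hQp hQq, smul_zero, smul_zero]

/-! ### Module.Basis adapted to two independent vectors -/

lemma exists_basis_ab (a b : V5) (hab : LinearIndependent ℝ ![a, b]) :
    ∃ u : Module.Basis (Fin 5) ℝ V5, u 0 = a ∧ u 1 = b := by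
  have hs : LinearIndepOn ℝ id (Set.range ![a, b]) := (linearIndepOn_id_range_iff hab.injective).mpr hab
  let v : Module.Basis (hs.extend (Set.subset_univ _)) ℝ V5 := Module.Basis.extend hs
  have hat : a ∈ hs.extend (Set.subset_univ _) :=
    hs.subset_extend _ ⟨0, rfl⟩
  have hbt : b ∈ hs.extend (Set.subset_univ _) :=
    hs.subset_extend _ ⟨1, rfl⟩
  have hne : a ≠ b := by
    intro h
    exact (by decide : (0 : Fin 2) ≠ 1) (hab.injective (by simpa using h))
  haveI : Fintype (hs.extend (Set.subset_univ _)) := FiniteDimensional.fintypeBasisIndex v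
  have hcard : Fintype.card (hs.extend (Set.subset_univ _)) = 5 := by
    rw [← Module.finrank_eq_card_basis v]
    simp
  let e0 : Fin 5 ≃ hs.extend (Set.subset_univ _) := (Fintype.equivFinOfCardEq hcard).symm
  let e1 : Fin 5 ≃ hs.extend (Set.subset_univ _) :=
    (Equiv.swap (0 : Fin 5) (e0.symm ⟨a, hat⟩)).trans e0
  have he1 : e1 0 = ⟨a, hat⟩ := by
    simp [e1, Equiv.swap_apply_left]
  have hb0 : e1.symm ⟨b, hbt⟩ ≠ 0 := by
    intro h
    apply hne
    have := congrArg e1 h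
    rw [Equiv.apply_symm_apply, he1] at this
    exact congrArg Subtype.val this.symm
  let e2 : Fin 5 ≃ hs.extend (Set.subset_univ _) :=
    (Equiv.swap (1 : Fin 5) (e1.symm ⟨b, hbt⟩)).trans e1
  have he20 : e2 0 = ⟨a, hat⟩ := by
    have : Equiv.swap (1 : Fin 5) (e1.symm ⟨b, hbt⟩) 0 = 0 :=
      Equiv.swap_apply_of_ne_of_ne (by decide) (Ne.symm hb0)
    simp [e2, this, he1]
  have he21 : e2 1 = ⟨b, hbt⟩ := by
    simp [e2, Equiv.swap_apply_left]
  refine ⟨v.reindex e2.symm, ?_, ?_⟩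
  · rw [Module.Basis.reindex_apply, Equiv.symm_symm, he20]
    exact Module.Basis.extend_apply_self hs _
  · rw [Module.Basis.reindex_apply, Equiv.symm_symm, he21]
    exact Module.Basis.extend_apply_self hs _

/-! ### Structure lemmas for `Lam2`, `Lam3` -/

lemma comm2 {w : Alg} (hw : w ∈ Lam2) (x : V5) : ι ℝ x * w = w * ι ℝ x := by
  induction hw using Submodule.span_induction with
  | mem y hy =>
    obtain ⟨p, q, rfl⟩ := hy
    rw [← mul_assoc, iswap x p, neg_mul, mul_assoc, iswap x q, mul_neg, neg_neg, ← mul_assoc]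
  | zero => simp
  | add y z _ _ hy hz => rw [mul_add, add_mul, hy, hz]
  | smul r y _ hy => rw [mul_smul_comm, smul_mul_assoc, hy]

lemma mul_ι_mem_Lam3 {w : Alg} (hw : w ∈ Lam2) (x : V5) : w * ι ℝ x ∈ Lam3 := by
  induction hw using Submodule.span_induction with
  | mem y hy => obtain ⟨p, q, rfl⟩ := hy; exact Submodule.subset_span ⟨p, q, x, rfl⟩
  | zero => rw [zero_mul]; exact Submodule.zero_mem _
  | add y z _ _ hy hz => rw [add_mul]; exact Submodule.add_mem _ hy hz
  | smul r y _ hy => rw [smul_mul_assoc]; exact Submodule.smul_mem _ _ hy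

lemma ιmul_lam3_mem_span (u : Module.Basis (Fin 5) ℝ V5) (x : V5) {γ : Alg} (hγ : γ ∈ Lam3) :
    ι ℝ x * γ ∈ Submodule.span ℝ (Set.range fun t : Fin 5 × Fin 5 × Fin 5 =>
      ι ℝ x * (ι ℝ (u t.1) * ι ℝ (u t.2.1) * ι ℝ (u t.2.2))) := by
  induction hγ using Submodule.span_induction with
  | mem y hy =>
    obtain ⟨p, q, r, rfl⟩ := hy
    rw [expand1 u p, expand1 u q, expand1 u r]
    simp only [Finset.sum_mul, Finset.mul_sum, smul_mul_assoc, mul_smul_comm]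
    refine Submodule.sum_mem _ fun i _ => Submodule.smul_mem _ _
      (Submodule.sum_mem _ fun j _ => Submodule.smul_mem _ _
        (Submodule.sum_mem _ fun k _ => Submodule.smul_mem _ _
          (Submodule.subset_span ⟨(k, j, i), rfl⟩)))
  | zero => rw [mul_zero]; exact Submodule.zero_mem _
  | add y z _ _ hy hz => rw [mul_add]; exact Submodule.add_mem _ hy hz
  | smul r y _ hy => rw [mul_smul_comm]; exact Submodule.smul_mem _ _ hy

end Stmt8Aux

open Stmt8Aux

set_option maxHeartbeats 1000000 in
/-- let `𝔤` be a 5-dimensional Lie algebra (encoded by its Chevalley–Eilenberg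
differential `d`), `α = ι a` and `β = ι b` linearly independent 1-forms, and
`V = {γ ∈ Z³ : γ∧α = 0}`. If `dim(β∧V) < 2`, then `𝔤` has no hypo structure whose
almost-contact form is `α`. -/
theorem stmt8 (d : ExteriorAlgebra ℝ (Fin 5 → ℝ) →ₗ[ℝ] ExteriorAlgebra ℝ (Fin 5 → ℝ))
    (hone : d 1 = 0)
    (hleib : ∀ (v : Fin 5 → ℝ) (x : ExteriorAlgebra ℝ (Fin 5 → ℝ)),
      d (ι ℝ v * x) = d (ι ℝ v) * x - ι ℝ v * d x)
    (hdd : ∀ x, d (d x) = 0)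
    (hd1 : ∀ v : Fin 5 → ℝ, d (ι ℝ v) ∈ Lam2)
    (a b : Fin 5 → ℝ) (hab : LinearIndependent ℝ ![a, b])
    (hdim : Module.finrank ℝ
      (Submodule.map (LinearMap.mulLeft ℝ (ι ℝ b))
        ((Lam3 ⊓ LinearMap.ker d) ⊓ LinearMap.ker (LinearMap.mulRight ℝ (ι ℝ a)))) < 2) :
    ¬ ∃ ω : Fin 3 → ExteriorAlgebra ℝ (Fin 5 → ℝ), IsHypo d a ω := by
  rintro ⟨ω, h2, ⟨v, hv, hva⟩, hd0, hda1, hda2⟩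
  obtain ⟨u, hu0, hu1⟩ := exists_basis_ab a b hab
  set N := Submodule.map (LinearMap.mulLeft ℝ (ι ℝ b))
      ((Lam3 ⊓ LinearMap.ker d) ⊓ LinearMap.ker (LinearMap.mulRight ℝ (ι ℝ a))) with hN
  have hmem : ∀ i : Fin 3, d (ω i * ι ℝ a) = 0 → ι ℝ b * (ω i * ι ℝ a) ∈ N := by
    intro i hdi
    refine ⟨ω i * ι ℝ a, ⟨⟨mul_ι_mem_Lam3 (h2 i) a, hdi⟩, ?_⟩, rfl⟩
    refine LinearMap.mem_ker.mpr ?_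
    show (ω i * ι ℝ a) * ι ℝ a = 0
    rw [mul_assoc, ι_sq_zero, mul_zero]
  have m1 := hmem 1 hda1
  have m2 := hmem 2 hda2
  have hli : LinearIndependent ℝ ![ι ℝ b * (ω 1 * ι ℝ a), ι ℝ b * (ω 2 * ι ℝ a)] := by
    rw [LinearIndependent.pair_iff]
    intro s t hst
    have hW : (s • ω 1 + t • ω 2) ∈ Lam2 :=
      Submodule.add_mem _ (Submodule.smul_mem _ _ (h2 1)) (Submodule.smul_mem _ _ (h2 2))
    have e2 : ι ℝ b * ((s • ω 1 + t • ω 2) * ι ℝ a) = 0 := by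
      calc ι ℝ b * ((s • ω 1 + t • ω 2) * ι ℝ a)
          = s • (ι ℝ b * (ω 1 * ι ℝ a)) + t • (ι ℝ b * (ω 2 * ι ℝ a)) := by
            rw [add_mul, smul_mul_assoc, smul_mul_assoc, mul_add, mul_smul_comm, mul_smul_comm]
        _ = 0 := hst
    have h1 : (s • ω 1 + t • ω 2) * ι ℝ a * ι ℝ b = 0 := by
      rw [mul_assoc, iswap a b, mul_neg, neg_eq_zero, ← mul_assoc, ← comm2 hW b, mul_assoc]
      exact e2
    have hWW := keyA u (s • ω 1 + t • ω 2) hW (by rw [hu0, hu1]; exact h1)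
    rw [hu0] at hWW
    have e11 : ω 1 * ω 1 = v := by rw [hv, if_pos rfl]
    have e12 : ω 1 * ω 2 = 0 := by rw [hv, if_neg (by decide)]
    have e21 : ω 2 * ω 1 = 0 := by rw [hv, if_neg (by decide)]
    have e22 : ω 2 * ω 2 = v := by rw [hv, if_pos rfl]
    have hWW2 : (s • ω 1 + t • ω 2) * (s • ω 1 + t • ω 2) = (s ^ 2 + t ^ 2) • v := by
      simp only [add_mul, mul_add, smul_mul_assoc, mul_smul_comm, e11, e12, e21, e22,
        smul_zero, add_zero, zero_add, smul_smul]
      rw [← add_smul]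
      ring_nf
    have hz : (s ^ 2 + t ^ 2) • (v * ι ℝ a) = 0 := by
      rw [← smul_mul_assoc, ← hWW2]; exact hWW
    have hs2 : s ^ 2 + t ^ 2 = 0 := by
      rcases smul_eq_zero.mp hz with h' | h'
      · exact h'
      · exact absurd h' hva
    constructor <;> nlinarith [sq_nonneg s, sq_nonneg t]
  haveI : FiniteDimensional ℝ (Submodule.span ℝ (Set.range fun t : Fin 5 × Fin 5 × Fin 5 =>
      ι ℝ b * (ι ℝ (u t.1) * ι ℝ (u t.2.1) * ι ℝ (u t.2.2)))) :=
    FiniteDimensional.span_of_finite ℝ (Set.finite_range _)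
  haveI : FiniteDimensional ℝ N := by
    refine Submodule.finiteDimensional_of_le (S₂ := Submodule.span ℝ
      (Set.range fun t : Fin 5 × Fin 5 × Fin 5 =>
        ι ℝ b * (ι ℝ (u t.1) * ι ℝ (u t.2.1) * ι ℝ (u t.2.2)))) ?_
    rintro z ⟨γ, hγ, rfl⟩
    exact ιmul_lam3_mem_span u b hγ.1.1
  let y : Fin 2 → N := ![⟨_, m1⟩, ⟨_, m2⟩]
  have hy : LinearIndependent ℝ y := by
    have hcomp : (N.subtype ∘ y) = ![ι ℝ b * (ω 1 * ι ℝ a), ι ℝ b * (ω 2 * ι ℝ a)] := by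
      funext i; fin_cases i <;> rfl
    exact LinearIndependent.of_comp N.subtype (hcomp ▸ hli)
  have hcard := hy.fintype_card_le_finrank
  simp only [Fintype.card_fin] at hcard
  omega
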